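/- Let (Ω,Σ) be a measurable space, and let 𝔭, 𝔮 be probability measures on Ω with 𝔭 ≪ 𝔮 and H := H(𝔭|𝔮) < ∞. Let u : Ω → (0,∞) be measurable and suppose there exists s > 0 with ∫ u^{−s} d𝔮 < ∞. Then the negative part (log u)⁻ := max(−log u, 0) belongs to L¹(𝔭), and ∫ (log u)⁻ d𝔭 ≤ 2·e^{H−1} · max( 1/s, log₂( 1 + (1 + ‖u^{−1}‖_{L^s(𝔮)}^{s})^{1/s} ) ). -/

import Mathlib

open MeasureTheory Real

/-- Young-type inequality: `a*b ≤ a log a - a + e^b` for `a ≥ 0`. -/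
lemma young_ineq (a b : ℝ) (ha : 0 ≤ a) :
    a * b ≤ a * Real.log a - a + Real.exp b := by
  rcases eq_or_lt_of_le ha with h | h
  · simp [← h, (Real.exp_pos b).le]
  · have h1 := Real.add_one_le_exp (b - Real.log a)
    have h2 : Real.exp (b - Real.log a) = Real.exp b / a := by
      rw [Real.exp_sub, Real.exp_log h]
    rw [h2] at h1
    have h3 := mul_le_mul_of_nonneg_left h1 h.le
    rw [mul_div_cancel₀ _ h.ne'] at h3
    nlinarith

/-- eq. (menoL1) in the proof of Theorem "stab:piani":
if `𝔭 ≪ 𝔮` are probability measures with finite relative entropy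
`H = ∫ log (d𝔭/d𝔮) d𝔭`, and `u` is a positive measurable function with
`u⁻¹ ∈ L^s(𝔮)` for some `s > 0`, then the negative part `(log u)⁻ = max(-log u, 0)`
belongs to `L¹(𝔭)` and
`∫ (log u)⁻ d𝔭 ≤ 2 e^{H-1} max(1/s, log₂(1 + (1 + ‖u⁻¹‖_s^s)^{1/s}))`. -/
theorem log_neg_part_integrable
    {Ω : Type*} [MeasurableSpace Ω]
    (𝔭 𝔮 : Measure Ω) [IsProbabilityMeasure 𝔭] [IsProbabilityMeasure 𝔮]
    (hac : 𝔭 ≪ 𝔮)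
    (hH : Integrable (fun x => Real.log ((𝔭.rnDeriv 𝔮 x).toReal)) 𝔭)
    (u : Ω → ℝ) (humeas : Measurable u) (hupos : ∀ x, 0 < u x)
    (s : ℝ) (hs : 0 < s)
    (hus : Integrable (fun x => u x ^ (-s)) 𝔮) :
    Integrable (fun x => max (-Real.log (u x)) 0) 𝔭 ∧
    ∫ x, max (-Real.log (u x)) 0 ∂𝔭 ≤
      2 * Real.exp ((∫ x, Real.log ((𝔭.rnDeriv 𝔮 x).toReal) ∂𝔭) - 1) *
        max (1 / s)
          (Real.logb 2 (1 + (1 + ∫ x, u x ^ (-s) ∂𝔮) ^ (1 / s))) := by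
  have hρmeas : Measurable fun x => (𝔭.rnDeriv 𝔮 x).toReal :=
    (Measure.measurable_rnDeriv 𝔭 𝔮).ennreal_toReal
  have hρnn : ∀ x, 0 ≤ (𝔭.rnDeriv 𝔮 x).toReal := fun x => ENNReal.toReal_nonneg
  have hfmeas : Measurable fun x => max (-Real.log (u x)) 0 :=
    humeas.log.neg.max measurable_const
  have hfnn : ∀ x, 0 ≤ max (-Real.log (u x)) 0 := fun x => le_max_right _ _
  have hM0 : 0 ≤ ∫ x, u x ^ (-s) ∂𝔮 :=
    integral_nonneg fun x => (Real.rpow_pos_of_pos (hupos x) _).le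
  set M := ∫ x, u x ^ (-s) ∂𝔮 with hMdef
  set H := ∫ x, Real.log ((𝔭.rnDeriv 𝔮 x).toReal) ∂𝔭 with hHdef
  set c := Real.log (1 + M) with hcdef
  have hM1 : (0:ℝ) < 1 + M := by linarith
  have hc0 : 0 ≤ c := Real.log_nonneg (by linarith)
  -- pointwise exponential bound
  have hexp_le : ∀ x, Real.exp (s * max (-Real.log (u x)) 0) ≤ 1 + u x ^ (-s) := by
    intro x
    have hupow : (0:ℝ) < u x ^ (-s) := Real.rpow_pos_of_pos (hupos x) _
    rcases le_total (-Real.log (u x)) 0 with h | h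
    · rw [max_eq_right h, mul_zero, Real.exp_zero]; linarith
    · rw [max_eq_left h]
      have : Real.exp (s * -Real.log (u x)) = u x ^ (-s) := by
        rw [Real.rpow_def_of_pos (hupos x)]
        congr 1; ring
      rw [this]; linarith
  have h1us : Integrable (fun x => 1 + u x ^ (-s)) 𝔮 := (integrable_const 1).add hus
  have heexp : Integrable (fun x => Real.exp (s * max (-Real.log (u x)) 0)) 𝔮 := by
    refine h1us.mono' ((hfmeas.const_mul s).exp).aestronglyMeasurable ?_
    filter_upwards with x
    rw [Real.norm_eq_abs, abs_of_pos (Real.exp_pos _)]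
    exact hexp_le x
  have hρint : Integrable (fun x => (𝔭.rnDeriv 𝔮 x).toReal) 𝔮 :=
    Measure.integrable_toReal_rnDeriv
  have hρ1 : ∫ x, (𝔭.rnDeriv 𝔮 x).toReal ∂𝔮 = 1 := by
    rw [Measure.integral_toReal_rnDeriv hac]; simp
  have hρlogint : Integrable
      (fun x => (𝔭.rnDeriv 𝔮 x).toReal * Real.log ((𝔭.rnDeriv 𝔮 x).toReal)) 𝔮 := by
    have := (integrable_rnDeriv_smul_iff (f := fun x =>
      Real.log ((𝔭.rnDeriv 𝔮 x).toReal)) hac).mpr hH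
    simpa [smul_eq_mul] using this
  have hHeq : ∫ x, (𝔭.rnDeriv 𝔮 x).toReal * Real.log ((𝔭.rnDeriv 𝔮 x).toReal) ∂𝔮 = H := by
    have := integral_rnDeriv_smul (f := fun x =>
      Real.log ((𝔭.rnDeriv 𝔮 x).toReal)) hac
    simpa [smul_eq_mul] using this
  -- dominating function from Young's inequality
  set g : Ω → ℝ := fun x =>
    (𝔭.rnDeriv 𝔮 x).toReal * Real.log ((𝔭.rnDeriv 𝔮 x).toReal)
      - (𝔭.rnDeriv 𝔮 x).toReal
      + Real.exp (s * max (-Real.log (u x)) 0) * Real.exp (-c)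
      + c * (𝔭.rnDeriv 𝔮 x).toReal with hgdef
  have hdom : ∀ x, (𝔭.rnDeriv 𝔮 x).toReal * (s * max (-Real.log (u x)) 0) ≤ g x := by
    intro x
    have hy := young_ineq ((𝔭.rnDeriv 𝔮 x).toReal)
      (s * max (-Real.log (u x)) 0 - c) (hρnn x)
    have he : Real.exp (s * max (-Real.log (u x)) 0 - c)
        = Real.exp (s * max (-Real.log (u x)) 0) * Real.exp (-c) := by
      rw [← Real.exp_add]; ring_nf
    rw [he] at hy
    simp only [hgdef]
    nlinarith [hρnn x]
  have hg_int : Integrable g 𝔮 :=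
    ((hρlogint.sub hρint).add (heexp.mul_const (Real.exp (-c)))).add (hρint.const_mul c)
  have hsf_int : Integrable
      (fun x => (𝔭.rnDeriv 𝔮 x).toReal * (s * max (-Real.log (u x)) 0)) 𝔮 := by
    refine hg_int.mono' (hρmeas.mul (hfmeas.const_mul s)).aestronglyMeasurable ?_
    filter_upwards with x
    rw [Real.norm_eq_abs, abs_of_nonneg (mul_nonneg (hρnn x) (mul_nonneg hs.le (hfnn x)))]
    exact hdom x
  have hρf_int : Integrable
      (fun x => (𝔭.rnDeriv 𝔮 x).toReal * max (-Real.log (u x)) 0) 𝔮 := by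
    refine (hsf_int.const_mul s⁻¹).congr ?_
    filter_upwards with x
    field_simp
  have hf_int : Integrable (fun x => max (-Real.log (u x)) 0) 𝔭 := by
    refine (integrable_rnDeriv_smul_iff (f := fun x =>
      max (-Real.log (u x)) 0) hac).mp ?_
    simpa [smul_eq_mul] using hρf_int
  refine ⟨hf_int, ?_⟩
  -- integral identity and bound
  have hIf : ∫ x, max (-Real.log (u x)) 0 ∂𝔭
      = ∫ x, (𝔭.rnDeriv 𝔮 x).toReal * max (-Real.log (u x)) 0 ∂𝔮 := by
    have := integral_rnDeriv_smul (f := fun x => max (-Real.log (u x)) 0) hac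
    simpa [smul_eq_mul] using this.symm
  have hE_le : ∫ x, Real.exp (s * max (-Real.log (u x)) 0) ∂𝔮 ≤ 1 + M := by
    have h := integral_mono heexp h1us hexp_le
    rw [integral_add (integrable_const 1) hus] at h
    simpa using h
  have hgint_eq : ∫ x, g x ∂𝔮 = H - 1
      + (∫ x, Real.exp (s * max (-Real.log (u x)) 0) ∂𝔮) * Real.exp (-c) + c := by
    have hg1 : Integrable (fun x => (𝔭.rnDeriv 𝔮 x).toReal * Real.log ((𝔭.rnDeriv 𝔮 x).toReal)
        - (𝔭.rnDeriv 𝔮 x).toReal) 𝔮 := hρlogint.sub hρint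
    have hg2 : Integrable (fun x => Real.exp (s * max (-Real.log (u x)) 0)
        * Real.exp (-c)) 𝔮 := heexp.mul_const (Real.exp (-c))
    have hg12 : Integrable (fun x => ((𝔭.rnDeriv 𝔮 x).toReal * Real.log ((𝔭.rnDeriv 𝔮 x).toReal)
        - (𝔭.rnDeriv 𝔮 x).toReal) + Real.exp (s * max (-Real.log (u x)) 0)
        * Real.exp (-c)) 𝔮 := hg1.add hg2
    have hg3 : Integrable (fun x => c * (𝔭.rnDeriv 𝔮 x).toReal) 𝔮 := hρint.const_mul c
    simp only [hgdef]
    rw [integral_add hg12 hg3, integral_add hg1 hg2,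
      integral_sub hρlogint hρint, integral_mul_const, integral_const_mul,
      hHeq, hρ1, mul_one]
  have hmain : s * ∫ x, max (-Real.log (u x)) 0 ∂𝔭 ≤ H + c := by
    have h1 : ∫ x, (𝔭.rnDeriv 𝔮 x).toReal * (s * max (-Real.log (u x)) 0) ∂𝔮
        ≤ ∫ x, g x ∂𝔮 := integral_mono hsf_int hg_int hdom
    have h2 : ∫ x, (𝔭.rnDeriv 𝔮 x).toReal * (s * max (-Real.log (u x)) 0) ∂𝔮
        = s * ∫ x, (𝔭.rnDeriv 𝔮 x).toReal * max (-Real.log (u x)) 0 ∂𝔮 := by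
      rw [← integral_const_mul]
      congr 1; funext x; ring
    have h3 : (∫ x, Real.exp (s * max (-Real.log (u x)) 0) ∂𝔮) * Real.exp (-c) ≤ 1 := by
      have hecpos : 0 < Real.exp (-c) := Real.exp_pos _
      have : Real.exp (-c) = (1 + M)⁻¹ := by
        rw [Real.exp_neg, hcdef, Real.exp_log hM1]
      rw [this]
      rw [mul_inv_le_iff₀ hM1, one_mul]
      exact hE_le
    rw [h2, hgint_eq, ← hIf] at h1
    linarith [h1, h3]
  -- nonnegativity of the relative entropy H
  have hρpos : ∀ᵐ x ∂𝔭, 0 < (𝔭.rnDeriv 𝔮 x).toReal := by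
    filter_upwards [Measure.rnDeriv_pos hac, hac.ae_le (Measure.rnDeriv_lt_top 𝔭 𝔮)]
      with x h1 h2
    exact ENNReal.toReal_pos h1.ne' h2.ne
  have hinvρ_int𝔮 : Integrable
      (fun x => (𝔭.rnDeriv 𝔮 x).toReal * ((𝔭.rnDeriv 𝔮 x).toReal)⁻¹) 𝔮 := by
    refine (integrable_const (1:ℝ)).mono' (hρmeas.mul hρmeas.inv).aestronglyMeasurable ?_
    filter_upwards with x
    rw [Real.norm_eq_abs]
    rcases eq_or_ne ((𝔭.rnDeriv 𝔮 x).toReal) 0 with h | h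
    · simp [h]
    · rw [mul_inv_cancel₀ h]; simp
  have hinv_int : Integrable (fun x => ((𝔭.rnDeriv 𝔮 x).toReal)⁻¹) 𝔭 := by
    refine (integrable_rnDeriv_smul_iff (f := fun x =>
      ((𝔭.rnDeriv 𝔮 x).toReal)⁻¹) hac).mp ?_
    simpa [smul_eq_mul] using hinvρ_int𝔮
  have hinv_le : ∫ x, ((𝔭.rnDeriv 𝔮 x).toReal)⁻¹ ∂𝔭 ≤ 1 := by
    have heq := integral_rnDeriv_smul (f := fun x =>
      ((𝔭.rnDeriv 𝔮 x).toReal)⁻¹) hac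
    simp only [smul_eq_mul] at heq
    rw [← heq]
    calc ∫ x, (𝔭.rnDeriv 𝔮 x).toReal * ((𝔭.rnDeriv 𝔮 x).toReal)⁻¹ ∂𝔮
        ≤ ∫ _x, (1:ℝ) ∂𝔮 := by
          refine integral_mono hinvρ_int𝔮 (integrable_const 1) fun x => ?_
          rcases eq_or_ne ((𝔭.rnDeriv 𝔮 x).toReal) 0 with h | h
          · simp [h]
          · rw [mul_inv_cancel₀ h]
      _ = 1 := by simp
  have hH0 : 0 ≤ H := by
    have hptwise : ∀ᵐ x ∂𝔭,
        1 - ((𝔭.rnDeriv 𝔮 x).toReal)⁻¹ ≤ Real.log ((𝔭.rnDeriv 𝔮 x).toReal) := by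
      filter_upwards [hρpos] with x hx
      exact Real.one_sub_inv_le_log_of_pos hx
    have h1 := integral_mono_ae ((integrable_const 1).sub hinv_int) hH hptwise
    simp only [Pi.sub_apply] at h1
    rw [integral_sub (integrable_const 1) hinv_int] at h1
    simp only [integral_const, measure_univ, probReal_univ, ENNReal.toReal_one, smul_eq_mul, mul_one] at h1
    rw [hHdef]
    linarith
  -- final arithmetic
  set A := max (1 / s) (Real.logb 2 (1 + (1 + M) ^ (1 / s))) with hAdef
  have hA1 : 1 / s ≤ A := le_max_left _ _
  have hlog2 : (0:ℝ) < Real.log 2 := Real.log_pos (by norm_num)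
  have hpow_pos : (0:ℝ) < (1 + M) ^ (1 / s) := Real.rpow_pos_of_pos hM1 _
  have hc_le : c ≤ s * (A * Real.log 2) := by
    have h1 : Real.logb 2 ((1 + M) ^ (1 / s))
        ≤ Real.logb 2 (1 + (1 + M) ^ (1 / s)) :=
      Real.logb_le_logb_of_le (by norm_num) hpow_pos (by linarith)
    have h2 : Real.logb 2 ((1 + M) ^ (1 / s)) = (1 / s) * c / Real.log 2 := by
      rw [Real.logb, Real.log_rpow hM1, hcdef]
    have h3 : 1 / s * c / Real.log 2 ≤ A := by
      rw [← h2]; exact h1.trans (le_max_right _ _)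
    have h5 : c = (1 / s * c / Real.log 2) * (s * Real.log 2) := by
      field_simp
    rw [h5]
    calc (1 / s * c / Real.log 2) * (s * Real.log 2)
        ≤ A * (s * Real.log 2) := mul_le_mul_of_nonneg_right h3 (by positivity)
      _ = s * (A * Real.log 2) := by ring
  have hHexp : H + Real.log 2 ≤ 2 * Real.exp (H - 1) := by
    have h := Real.add_one_le_exp (H - 1 + Real.log 2)
    rw [Real.exp_add, Real.exp_log two_pos] at h
    linarith
  have hsA : 1 ≤ s * A := by
    rw [div_le_iff₀ hs] at hA1
    linarith [hA1]
  have hApos : 0 < A := lt_of_lt_of_le (by positivity) hA1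
  have hexpos : 0 < Real.exp (H - 1) := Real.exp_pos _
  -- combine: s * ∫f ≤ H + c ≤ s*A*H + s*A*log 2 ≤ s*A*2exp(H-1)
  have hfinal : s * ∫ x, max (-Real.log (u x)) 0 ∂𝔭
      ≤ s * (2 * Real.exp (H - 1) * A) := by
    have k1 : H ≤ s * A * H := le_mul_of_one_le_left hH0 hsA
    have k2 : s * A * (H + Real.log 2) ≤ s * A * (2 * Real.exp (H - 1)) :=
      mul_le_mul_of_nonneg_left hHexp (by positivity)
    nlinarith [hmain, hc_le, k1, k2]
  exact le_of_mul_le_mul_left (by linarith [hfinal]) hs
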